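/- Let 2l < a < 2l+1, l ∈ ℕ, let μ₁ < … < μ_{l+1} = π/2 be the first l+1 positive solutions of μ·tan(μa) = (π/2)·tan(πa/2), and let f_j(x) = cos(μ_j x). Then any linear combination f = Σ_j α_j f_j satisfies ∫₀^a f'(x)² dx − (π²/4)·∫₀^a f(x)² dx + (√(M(a))/2)·f(a)² ≤ 0, where M(a) = π²·tan²(πa/2). -/

import Mathlib

open MeasureTheory Real Set intervalIntegral

lemma aux_int_cos_cos (μ ν a : ℝ) (h : μ^2 ≠ ν^2) :
    ∫ x in (0:ℝ)..a, Real.cos (μ*x) * Real.cos (ν*x)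
      = (μ * Real.sin (μ*a) * Real.cos (ν*a) - ν * Real.cos (μ*a) * Real.sin (ν*a))/(μ^2-ν^2) := by
  have hD : μ^2 - ν^2 ≠ 0 := sub_ne_zero.mpr h
  have key : ∀ x : ℝ, HasDerivAt
      (fun x => (μ * Real.sin (μ*x) * Real.cos (ν*x) - ν * Real.cos (μ*x) * Real.sin (ν*x))/(μ^2-ν^2))
      (Real.cos (μ*x) * Real.cos (ν*x)) x := by
    intro x
    have h1 : HasDerivAt (fun x : ℝ => μ * x) μ x := by
      simpa using (hasDerivAt_id x).const_mul μ
    have h2 : HasDerivAt (fun x : ℝ => ν * x) ν x := by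
      simpa using (hasDerivAt_id x).const_mul ν
    have H := (((h1.sin.const_mul μ).fun_mul h2.cos).fun_sub ((h1.cos.const_mul ν).fun_mul h2.sin)).div_const (μ^2-ν^2)
    refine H.congr_deriv ?_
    field_simp
    ring
  have hcont : Continuous fun x => Real.cos (μ*x) * Real.cos (ν*x) := by continuity
  rw [intervalIntegral.integral_eq_sub_of_hasDerivAt (fun x _ => key x)
    (hcont.intervalIntegrable 0 a)]
  simp

lemma aux_int_sin_sin (μ ν a : ℝ) (h : μ^2 ≠ ν^2) :
    ∫ x in (0:ℝ)..a, Real.sin (μ*x) * Real.sin (ν*x)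
      = (ν * Real.sin (μ*a) * Real.cos (ν*a) - μ * Real.cos (μ*a) * Real.sin (ν*a))/(μ^2-ν^2) := by
  have hD : μ^2 - ν^2 ≠ 0 := sub_ne_zero.mpr h
  have key : ∀ x : ℝ, HasDerivAt
      (fun x => (ν * Real.sin (μ*x) * Real.cos (ν*x) - μ * Real.cos (μ*x) * Real.sin (ν*x))/(μ^2-ν^2))
      (Real.sin (μ*x) * Real.sin (ν*x)) x := by
    intro x
    have h1 : HasDerivAt (fun x : ℝ => μ * x) μ x := by
      simpa using (hasDerivAt_id x).const_mul μ
    have h2 : HasDerivAt (fun x : ℝ => ν * x) ν x := by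
      simpa using (hasDerivAt_id x).const_mul ν
    have H := (((h1.sin.const_mul ν).fun_mul h2.cos).fun_sub ((h1.cos.const_mul μ).fun_mul h2.sin)).div_const (μ^2-ν^2)
    refine H.congr_deriv ?_
    field_simp
    ring
  have hcont : Continuous fun x => Real.sin (μ*x) * Real.sin (ν*x) := by continuity
  rw [intervalIntegral.integral_eq_sub_of_hasDerivAt (fun x _ => key x)
    (hcont.intervalIntegrable 0 a)]
  simp

lemma aux_int_cos_sq (μ a : ℝ) (h : μ ≠ 0) :
    ∫ x in (0:ℝ)..a, Real.cos (μ*x) * Real.cos (μ*x)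
      = a/2 + Real.sin (μ*a) * Real.cos (μ*a) / (2*μ) := by
  have key : ∀ x : ℝ, HasDerivAt
      (fun x => x/2 + Real.sin (μ*x) * Real.cos (μ*x) / (2*μ))
      (Real.cos (μ*x) * Real.cos (μ*x)) x := by
    intro x
    have h1 : HasDerivAt (fun x : ℝ => μ * x) μ x := by
      simpa using (hasDerivAt_id x).const_mul μ
    have H := ((hasDerivAt_id x).div_const 2).fun_add (((h1.sin.fun_mul h1.cos)).div_const (2*μ))
    refine H.congr_deriv ?_
    have t := Real.sin_sq_add_cos_sq (μ*x)
    field_simp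
    linear_combination (-1 : ℝ) * t
  have hcont : Continuous fun x => Real.cos (μ*x) * Real.cos (μ*x) := by continuity
  rw [intervalIntegral.integral_eq_sub_of_hasDerivAt (fun x _ => key x)
    (hcont.intervalIntegrable 0 a)]
  simp

lemma aux_int_sin_sq (μ a : ℝ) (h : μ ≠ 0) :
    ∫ x in (0:ℝ)..a, Real.sin (μ*x) * Real.sin (μ*x)
      = a/2 - Real.sin (μ*a) * Real.cos (μ*a) / (2*μ) := by
  have key : ∀ x : ℝ, HasDerivAt
      (fun x => x/2 - Real.sin (μ*x) * Real.cos (μ*x) / (2*μ))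
      (Real.sin (μ*x) * Real.sin (μ*x)) x := by
    intro x
    have h1 : HasDerivAt (fun x : ℝ => μ * x) μ x := by
      simpa using (hasDerivAt_id x).const_mul μ
    have H := ((hasDerivAt_id x).div_const 2).fun_sub (((h1.sin.fun_mul h1.cos)).div_const (2*μ))
    refine H.congr_deriv ?_
    have t := Real.sin_sq_add_cos_sq (μ*x)
    field_simp
    linear_combination (-1 : ℝ) * t
  have hcont : Continuous fun x => Real.sin (μ*x) * Real.sin (μ*x) := by continuity
  rw [intervalIntegral.integral_eq_sub_of_hasDerivAt (fun x _ => key x)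
    (hcont.intervalIntegrable 0 a)]
  simp

lemma aux_sum_sq_integral {n : ℕ} (u : Fin n → ℝ → ℝ) (hu : ∀ j, Continuous (u j)) (a : ℝ) :
    (∫ x in (0:ℝ)..a, (∑ j, u j x)^2) = ∑ j, ∑ k, ∫ x in (0:ℝ)..a, u j x * u k x := by
  have h1 : ∀ x : ℝ, (∑ j, u j x)^2 = ∑ j, ∑ k, u j x * u k x := by
    intro x; rw [sq, Finset.sum_mul_sum]
  rw [intervalIntegral.integral_congr (g := fun x => ∑ j, ∑ k, u j x * u k x) (fun x _ => h1 x),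
    intervalIntegral.integral_finset_sum]
  · exact Finset.sum_congr rfl fun j _ =>
      intervalIntegral.integral_finset_sum fun k _ => ((hu j).mul (hu k)).intervalIntegrable _ _
  · exact fun j _ => (continuous_finset_sum _ fun k _ => (hu j).mul (hu k)).intervalIntegrable _ _

set_option maxHeartbeats 1000000 in
theorem stmt14 (l : ℕ) (a : ℝ) (ha : 2 * (l:ℝ) < a) (ha' : a < 2 * (l:ℝ) + 1)
    (μ : Fin (l + 1) → ℝ) (hmono : StrictMono μ)
    (hpos : ∀ j, 0 < μ j)
    (hsol : ∀ j, μ j * Real.tan (μ j * a) = (π / 2) * Real.tan (π * a / 2))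
    (hlast : μ (Fin.last l) = π / 2)
    (hfirst : ∀ ν : ℝ, 0 < ν → ν < π / 2 →
        ν * Real.tan (ν * a) = (π / 2) * Real.tan (π * a / 2) → ∃ j, μ j = ν)
    (α : Fin (l + 1) → ℝ) :
    (∫ x in (0:ℝ)..a,
        deriv (fun x => ∑ j, α j * Real.cos (μ j * x)) x ^ 2)
      - (π ^ 2 / 4) * (∫ x in (0:ℝ)..a, (∑ j, α j * Real.cos (μ j * x)) ^ 2)
      + (Real.sqrt (π ^ 2 * Real.tan (π * a / 2) ^ 2) / 2)
          * (∑ j, α j * Real.cos (μ j * a)) ^ 2 ≤ 0 := by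
  have hπ := Real.pi_pos
  have ha0 : 0 < a := lt_of_le_of_lt (by positivity) ha
  -- tan (π a / 2) > 0
  have ht : 0 < Real.tan (π * a / 2) := by
    have hper : Real.tan (π * a / 2 - (l : ℝ) * π) = Real.tan (π * a / 2) :=
      Real.tan_periodic.sub_nat_mul_eq l
    rw [← hper]
    apply Real.tan_pos_of_pos_of_lt_pi_div_two <;> nlinarith
  set s : ℝ := π / 2 * Real.tan (π * a / 2) with hs_def
  have hs : 0 < s := by positivity
  have hsq : Real.sqrt (π ^ 2 * Real.tan (π * a / 2) ^ 2) / 2 = s := by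
    rw [show π ^ 2 * Real.tan (π * a / 2) ^ 2 = (π * Real.tan (π * a / 2)) ^ 2 by ring,
      Real.sqrt_sq (by positivity)]
    rw [hs_def]; ring
  have hcos : ∀ j, Real.cos (μ j * a) ≠ 0 := by
    intro j h0
    have h1 := hsol j
    rw [Real.tan_eq_sin_div_cos, h0, div_zero, mul_zero] at h1
    exact absurd h1.symm (ne_of_gt hs)
  have hsin : ∀ j, Real.sin (μ j * a) = s * Real.cos (μ j * a) / μ j := by
    intro j
    have h1 := hsol j
    rw [Real.tan_eq_sin_div_cos] at h1
    field_simp [hcos j] at h1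
    rw [eq_div_iff (ne_of_gt (hpos j))]
    linear_combination h1
  have hμ0 : ∀ j, μ j ≠ 0 := fun j => ne_of_gt (hpos j)
  have hle : ∀ j, μ j ≤ π / 2 := by
    intro j
    rw [← hlast]
    exact hmono.monotone (Fin.le_last j)
  have hss : ∀ j, Real.sin (μ j * a) * Real.cos (μ j * a) / (2 * μ j)
      = s * Real.cos (μ j * a)^2 / (2 * (μ j)^2) := by
    intro j
    rw [hsin j]
    field_simp
  clear_value s
  -- derivative of the sum
  have hderiv : (deriv (fun x => ∑ j, α j * Real.cos (μ j * x)))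
      = fun x => ∑ j, α j * (-(μ j) * Real.sin (μ j * x)) := by
    funext x
    have H : HasDerivAt (fun x => ∑ j, α j * Real.cos (μ j * x))
        (∑ j, α j * (-(μ j) * Real.sin (μ j * x))) x := by
      apply HasDerivAt.fun_sum
      intro j _
      have h1 : HasDerivAt (fun x : ℝ => μ j * x) (μ j) x := by
        simpa using (hasDerivAt_id x).const_mul (μ j)
      have h2 := (h1.cos).const_mul (α j)
      refine h2.congr_deriv ?_
      ring
    exact H.deriv
  simp only [hderiv]
  -- expand squares of sums
  have e1 := aux_sum_sq_integral (fun j x => α j * (-(μ j) * Real.sin (μ j * x)))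
    (fun j => by fun_prop) a
  have e2 := aux_sum_sq_integral (fun j x => α j * Real.cos (μ j * x))
    (fun j => by fun_prop) a
  have e3 : (∑ j, α j * Real.cos (μ j * a))^2
      = ∑ j, ∑ k, (α j * Real.cos (μ j * a)) * (α k * Real.cos (μ k * a)) := by
    rw [sq, Finset.sum_mul_sum]
  rw [e1, e2, hsq, e3]
  -- pull constants out of integrals
  have hx : ∀ j k : Fin (l+1),
      (∫ x in (0:ℝ)..a, (α j * (-(μ j) * Real.sin (μ j * x))) * (α k * (-(μ k) * Real.sin (μ k * x))))
      = α j * α k * (μ j * μ k) * ∫ x in (0:ℝ)..a, Real.sin (μ j * x) * Real.sin (μ k * x) := by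
    intro j k
    rw [← intervalIntegral.integral_const_mul]
    exact intervalIntegral.integral_congr fun x _ => by ring
  have hy : ∀ j k : Fin (l+1),
      (∫ x in (0:ℝ)..a, (α j * Real.cos (μ j * x)) * (α k * Real.cos (μ k * x)))
      = α j * α k * ∫ x in (0:ℝ)..a, Real.cos (μ j * x) * Real.cos (μ k * x) := by
    intro j k
    rw [← intervalIntegral.integral_const_mul]
    exact intervalIntegral.integral_congr fun x _ => by ring
  simp only [hx, hy]
  -- combine into a single double sum
  rw [Finset.mul_sum, Finset.mul_sum]
  simp only [Finset.mul_sum]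
  rw [← Finset.sum_sub_distrib]
  rw [← Finset.sum_add_distrib]
  apply Finset.sum_nonpos
  intro j _
  rw [← Finset.sum_sub_distrib, ← Finset.sum_add_distrib]
  apply Finset.sum_nonpos
  intro k _
  by_cases hjk : j = k
  · -- diagonal term
    subst hjk
    rw [aux_int_sin_sq _ _ (hμ0 j), aux_int_cos_sq _ _ (hμ0 j)]
    have heq : α j * α j * (μ j * μ j) * (a / 2 - Real.sin (μ j * a) * Real.cos (μ j * a) / (2 * μ j))
        - π ^ 2 / 4 * (α j * α j * (a / 2 + Real.sin (μ j * a) * Real.cos (μ j * a) / (2 * μ j)))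
        + s * (α j * Real.cos (μ j * a) * (α j * Real.cos (μ j * a)))
        = (α j)^2 * (((μ j)^2 - π^2/4) * (a/2 + s * Real.cos (μ j * a)^2 / (2 * (μ j)^2))) := by
      have hrel : s * Real.cos (μ j * a)^2
          = 2 * (μ j)^2 * (s * Real.cos (μ j * a)^2 / (2 * (μ j)^2)) := by
        have h2 : (2:ℝ) * (μ j)^2 ≠ 0 := mul_ne_zero two_ne_zero (pow_ne_zero 2 (hμ0 j))
        rw [mul_div_cancel₀ _ h2]
      linear_combination ((α j)^2 * (-(μ j)^2 - π^2/4)) * hss j + (α j)^2 * hrel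
    rw [heq]
    have h1 : (μ j)^2 - π^2/4 ≤ 0 := by nlinarith [hpos j, hle j]
    have h2 : (0:ℝ) ≤ a/2 + s * Real.cos (μ j * a)^2 / (2 * (μ j)^2) := by
      have : (0:ℝ) ≤ s * Real.cos (μ j * a)^2 / (2 * (μ j)^2) := by positivity
      linarith
    have h3 : ((μ j)^2 - π^2/4) * (a/2 + s * Real.cos (μ j * a)^2 / (2 * (μ j)^2)) ≤ 0 :=
      mul_nonpos_of_nonpos_of_nonneg h1 h2
    exact mul_nonpos_of_nonneg_of_nonpos (sq_nonneg _) h3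
  · -- off-diagonal term vanishes
    have hne : μ j ≠ μ k := fun h => hjk (hmono.injective h)
    have hD : (μ j)^2 ≠ (μ k)^2 := by
      intro h
      have h2 : (μ j - μ k) * (μ j + μ k) = 0 := by linear_combination h
      rcases mul_eq_zero.mp h2 with h3 | h3
      · exact hne (by linarith)
      · nlinarith [hpos j, hpos k]
    rw [aux_int_sin_sin _ _ _ hD, aux_int_cos_cos _ _ _ hD]
    have heq : α j * α k * (μ j * μ k) *
          ((μ k * Real.sin (μ j * a) * Real.cos (μ k * a) - μ j * Real.cos (μ j * a) * Real.sin (μ k * a)) / ((μ j)^2 - (μ k)^2))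
        - π ^ 2 / 4 * (α j * α k *
          ((μ j * Real.sin (μ j * a) * Real.cos (μ k * a) - μ k * Real.cos (μ j * a) * Real.sin (μ k * a)) / ((μ j)^2 - (μ k)^2)))
        + s * (α j * Real.cos (μ j * a) * (α k * Real.cos (μ k * a))) = 0 := by
      rw [hsin j, hsin k]
      have hDD : (μ j)^2 - (μ k)^2 ≠ 0 := sub_ne_zero.mpr hD
      field_simp [hμ0 j, hμ0 k, hDD]
      ring
    rw [heq]
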